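/- Let r ≥ 3 and n ≥ 2. Let π₀ = B(V) be a q-subgeometry of PG(r-1,q^n) and l_∞ = PG(U) a line not contained in the extension of any hyperplane of π₀, and let S = S(π₀,l_∞). Then there exists an r-dimensional K-subspace U' of U with B(U') = S such that for every point x of S and every integer j ≥ 1 the following are equivalent: (i) the weight of x with respect to U' equals j, i.e. dim_K(U' ∩ x) = j; (ii) the number of K-subspaces H of V with dim_K H = r-1 such that x is contained in the L-span of H equals (q^j - 1)/(q - 1). -/

import Mathlib

open Submodule Module Set

section Helpers

variable {K L W : Type*} [Field K] [Field L] [Algebra K L]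
    [AddCommGroup W] [Module L W] [Module K W] [IsScalarTower K L W]

theorem myLinIndepL [FiniteDimensional K W] [FiniteDimensional L W]
    (V : Submodule K W) (hVspan : Submodule.span L (V : Set W) = ⊤)
    (hVrank : Module.finrank K V = Module.finrank L W)
    {ι : Type*} (c : ι → W) (hmem : ∀ i, c i ∈ V)
    (hc : LinearIndependent K c) : LinearIndependent L c := by
  classical
  set c' : ι → V := fun i => ⟨c i, hmem i⟩ with hc'def
  have hcc : V.subtype ∘ c' = c := rfl
  have hc' : LinearIndependent K c' := by
    apply LinearIndependent.of_comp V.subtype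
    rw [hcc]; exact hc
  have hs : LinearIndepOn K id (Set.range c') := (linearIndepOn_id_range_iff hc'.injective).mpr hc'
  let b : Set V := hs.extend (Set.subset_univ _)
  let B : Basis b K V := Module.Basis.extend hs
  have hB : ⇑B = ((↑) : b → V) := Module.Basis.coe_extend hs
  haveI : Fintype b := FiniteDimensional.fintypeBasisIndex B
  have hcard : Fintype.card b = Module.finrank L W := by
    rw [← hVrank, Module.finrank_eq_card_basis B]
  let f : b → W := fun i => ((i : V) : W)
  have hrange : Set.range f = V.subtype '' (Set.range ⇑B) := by
    rw [hB]
    ext z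
    simp [f, Set.range_comp]
  have hVf : V ≤ (Submodule.span L (Set.range f)).restrictScalars K := by
    have h1 : Submodule.span K (Set.range f) = V := by
      have : Submodule.map V.subtype (Submodule.span K (Set.range ⇑B)) =
          Submodule.span K (V.subtype '' (Set.range ⇑B)) := Submodule.map_span _ _
      rw [B.span_eq] at this
      rw [hrange, ← this, Submodule.map_subtype_top]
    calc V = Submodule.span K (Set.range f) := h1.symm
      _ ≤ (Submodule.span L (Set.range f)).restrictScalars K :=
        Submodule.span_le.mpr Submodule.subset_span
  have htop : ⊤ ≤ Submodule.span L (Set.range f) := by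
    rw [← hVspan]
    rw [Submodule.span_le]
    intro z hz
    exact hVf hz
  have hLf : LinearIndependent L f :=
    linearIndependent_of_top_le_span_of_card_eq_finrank htop hcard
  have hinj : Function.Injective c' := hc'.injective
  let e : ι → b := fun i => ⟨c' i, hs.subset_extend _ ⟨i, rfl⟩⟩
  have he : Function.Injective e := fun i j hij => hinj (Subtype.ext_iff.mp hij)
  have : f ∘ e = c := rfl
  rw [← this]
  exact hLf.comp e he

theorem myFinrankSpanL [FiniteDimensional K W] [FiniteDimensional L W]
    (V : Submodule K W) (hVspan : Submodule.span L (V : Set W) = ⊤)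
    (hVrank : Module.finrank K V = Module.finrank L W)
    (H : Submodule K W) (hHV : H ≤ V) :
    Module.finrank L (Submodule.span L (H : Set W)) = Module.finrank K H := by
  classical
  let m := Module.finrank K H
  let bH : Basis (Fin m) K H := Module.finBasisOfFinrankEq K H rfl
  let c : Fin m → W := fun i => ((bH i : H) : W)
  have hmemH : ∀ i, c i ∈ H := fun i => (bH i).2
  have h1 : Submodule.span K (Set.range c) = H := by
    have h2 : Submodule.map H.subtype (Submodule.span K (Set.range ⇑bH)) =
        Submodule.span K (H.subtype '' (Set.range ⇑bH)) := Submodule.map_span _ _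
    rw [bH.span_eq, Submodule.map_subtype_top] at h2
    rw [h2, ← Set.range_comp]
    rfl
  have hspan : Submodule.span L (H : Set W) = Submodule.span L (Set.range c) := by
    apply le_antisymm
    · rw [Submodule.span_le]
      intro z hz
      have : z ∈ (Submodule.span K (Set.range c)) := h1 ▸ hz
      have h3 : Submodule.span K (Set.range c) ≤
          (Submodule.span L (Set.range c)).restrictScalars K :=
        Submodule.span_le.mpr Submodule.subset_span
      exact h3 this
    · exact Submodule.span_mono (fun z hz => by
        obtain ⟨i, rfl⟩ := hz; exact hmemH i)
  have hcK : LinearIndependent K c :=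
    bH.linearIndependent.map' H.subtype H.ker_subtype
  have hcL : LinearIndependent L c := myLinIndepL V hVspan hVrank c (fun i => hHV (hmemH i)) hcK
  rw [hspan, finrank_span_eq_card hcL, Fintype.card_fin]

end Helpers

/-- `BSet L X` is the set of projective points (1-dimensional `L`-subspaces of `W`)
spanned by the nonzero vectors of `X`. -/
def BSet (L : Type*) [Field L] {W : Type*} [AddCommGroup W] [Module L W]
    (X : Set W) : Set (Submodule L W) :=
  {P | ∃ x ∈ X, x ≠ 0 ∧ P = Submodule.span L {x}}

/-- The splash of the `q`-subgeometry `B(V)` of `PG(W)` on the line `PG(U)`: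
the set of points of `PG(U)` lying in the `L`-span (extension) of some hyperplane
(`(r-1)`-dimensional `K`-subspace) of `V`. -/
def Splash (K L : Type*) [Field K] [Field L] [Algebra K L]
    {W : Type*} [AddCommGroup W] [Module L W] [Module K W] [IsScalarTower K L W]
    (V : Submodule K W) (U : Submodule L W) (r : ℕ) : Set (Submodule L W) :=
  {P | Module.finrank L P = 1 ∧ P ≤ U ∧
    ∃ H : Submodule K W, H ≤ V ∧ Module.finrank K H = r - 1 ∧
      P ≤ Submodule.span L (H : Set W)}

set_option maxHeartbeats 2000000 in
/-- in the splash `S(π₀, l_∞)`, a point has weight `j` if and only if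
it lies on exactly `(q^j - 1)/(q - 1)` hyperplanes of the subgeometry `π₀`. -/
theorem weight_iff_number_of_hyperplanes
    (K L : Type*) [Field K] [Field L] [Algebra K L] [Fintype K] [Fintype L]
    (q r n : ℕ) (hq : Fintype.card K = q)
    (hr : 3 ≤ r) (hn : 2 ≤ n) (hrank : Module.finrank K L = n)
    (V : Submodule K (Fin r → L))
    (hVrank : Module.finrank K V = r)
    (hVspan : Submodule.span L (V : Set (Fin r → L)) = ⊤)
    (U : Submodule L (Fin r → L)) (hU : Module.finrank L U = 2)
    (hext : ∀ H : Submodule K (Fin r → L), H ≤ V → Module.finrank K H = r - 1 →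
      ¬ U ≤ Submodule.span L (H : Set (Fin r → L))) :
    ∃ U' : Submodule K (Fin r → L), U' ≤ U.restrictScalars K ∧
      Module.finrank K U' = r ∧
      BSet L (U' : Set (Fin r → L)) = Splash K L V U r ∧
      ∀ x ∈ Splash K L V U r, ∀ j : ℕ, 1 ≤ j →
        (Module.finrank K ↥(U' ⊓ x.restrictScalars K) = j ↔
          Nat.card {H : Submodule K (Fin r → L) //
              H ≤ V ∧ Module.finrank K H = r - 1 ∧
                x ≤ Submodule.span L (H : Set (Fin r → L))} =
            (q ^ j - 1) / (q - 1)) := by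
  classical
  have hq2 : 2 ≤ q := hq ▸ Fintype.one_lt_card
  have hWr : Module.finrank L (Fin r → L) = r := by
    simp [Module.finrank_pi]
  have hWrK : Module.finrank K V = Module.finrank L (Fin r → L) := by
    rw [hVrank, hWr]
  -- basis of V which is an L-basis of the ambient space
  obtain ⟨bV⟩ : Nonempty (Basis (Fin r) K V) := ⟨Module.finBasisOfFinrankEq K V hVrank⟩
  set w : Fin r → (Fin r → L) := fun i => ((bV i : V) : Fin r → L) with hw
  have hwV : ∀ i, w i ∈ V := fun i => (bV i).2
  have hspanw : Submodule.span K (Set.range w) = V := by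
    have h2 : Submodule.map V.subtype (Submodule.span K (Set.range ⇑bV)) =
        Submodule.span K (V.subtype '' (Set.range ⇑bV)) := Submodule.map_span _ _
    rw [bV.span_eq, Submodule.map_subtype_top] at h2
    rw [h2, ← Set.range_comp]
    rfl
  have htop : ⊤ ≤ Submodule.span L (Set.range w) := by
    rw [← hVspan, Submodule.span_le]
    intro z hz
    have h3 : z ∈ Submodule.span K (Set.range w) := hspanw ▸ hz
    exact (Submodule.span_le.mpr Submodule.subset_span :
      Submodule.span K (Set.range w) ≤
        (Submodule.span L (Set.range w)).restrictScalars K) h3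
  let v : Basis (Fin r) L (Fin r → L) :=
    basisOfTopLeSpanOfCardEqFinrank w htop (by simp [hWr])
  have hv : ⇑v = w := coe_basisOfTopLeSpanOfCardEqFinrank w htop (by simp [hWr])
  -- the L-functionals
  set lam : (Fin r → K) → ((Fin r → L) →ₗ[L] L) :=
    fun a => ∑ i, algebraMap K L (a i) • v.coord i with hlam
  have lam_apply : ∀ a u, lam a u = ∑ i, algebraMap K L (a i) * v.repr u i := by
    intro a u
    simp [hlam, Basis.coord_apply, smul_eq_mul, Algebra.smul_def]
  have lam_w : ∀ a j, lam a (w j) = algebraMap K L (a j) := by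
    intro a j
    rw [lam_apply, ← congrFun hv j]
    simp [Basis.repr_self, Finsupp.single_apply]
  have lam_add : ∀ a a' u, lam (a + a') u = lam a u + lam a' u := by
    intro a a' u
    simp [lam_apply, add_mul, Finset.sum_add_distrib]
  have lam_smulK : ∀ (k : K) a u, lam (k • a) u = algebraMap K L k * lam a u := by
    intro k a u
    simp [lam_apply, Finset.mul_sum, mul_assoc]
  -- the K-functionals on V
  set alp : (Fin r → K) → (V →ₗ[K] K) :=
    fun a => ∑ i, a i • bV.coord i with halp
  have alp_apply : ∀ a x, alp a x = ∑ i, a i * bV.repr x i := by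
    intro a x
    simp [halp, Basis.coord_apply, smul_eq_mul]
  have alp_bV : ∀ a j, alp a (bV j) = a j := by
    intro a j
    rw [alp_apply]
    simp [Basis.repr_self, Finsupp.single_apply]
  have bridge : ∀ a (x : V), lam a (x : Fin r → L) = algebraMap K L (alp a x) := by
    intro a x
    have hx : (x : Fin r → L) = ∑ i, bV.repr x i • w i := by
      conv_lhs => rw [← bV.sum_repr x]
      push_cast
      simp [hw]
    rw [hx, map_sum, alp_apply, map_sum]
    refine Finset.sum_congr rfl fun i _ => ?_
    rw [LinearMap.map_smul_of_tower, lam_w, Algebra.smul_def, ← map_mul, mul_comm]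
  -- hyperplanes of V
  set Ha : (Fin r → K) → Submodule K (Fin r → L) :=
    fun a => Submodule.map V.subtype (LinearMap.ker (alp a)) with hHa
  have HaleV : ∀ a, Ha a ≤ V := fun a => Submodule.map_subtype_le _ _
  have alp_ne : ∀ a, a ≠ 0 → alp a ≠ 0 := by
    intro a ha h0
    obtain ⟨j, hj⟩ := Function.ne_iff.mp ha
    exact hj (by rw [← alp_bV a j, h0]; rfl)
  have Ha_rank : ∀ a, a ≠ 0 → Module.finrank K (Ha a) = r - 1 := by
    intro a ha
    have h1 := LinearMap.finrank_range_add_finrank_ker (alp a)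
    have hsurj : LinearMap.range (alp a) = ⊤ := by
      obtain ⟨x, hx⟩ : ∃ x, alp a x ≠ 0 := by
        by_contra h
        push_neg at h
        exact alp_ne a ha (LinearMap.ext fun x => h x)
      rw [LinearMap.range_eq_top]
      intro k
      exact ⟨(k / alp a x) • x, by rw [map_smul, smul_eq_mul, div_mul_cancel₀ _ hx]⟩
    rw [hsurj, finrank_top, Module.finrank_self, hVrank] at h1
    rw [hHa, Submodule.finrank_map_subtype_eq]
    omega
  have lam_ne : ∀ a, a ≠ 0 → lam a ≠ 0 := by
    intro a ha h0
    obtain ⟨j, hj⟩ := Function.ne_iff.mp ha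
    have := lam_w a j
    rw [h0] at this
    exact hj ((map_eq_zero_iff _ (algebraMap K L).injective).mp this.symm)
  have ker_rank : ∀ a, a ≠ 0 → Module.finrank L (LinearMap.ker (lam a)) = r - 1 := by
    intro a ha
    have h1 := LinearMap.finrank_range_add_finrank_ker (lam a)
    have hsurj : LinearMap.range (lam a) = ⊤ := by
      obtain ⟨x, hx⟩ : ∃ x, lam a x ≠ 0 := by
        by_contra h
        push_neg at h
        exact lam_ne a ha (LinearMap.ext fun x => h x)
      rw [LinearMap.range_eq_top]
      intro k
      exact ⟨(k / lam a x) • x, by rw [map_smul, smul_eq_mul, div_mul_cancel₀ _ hx]⟩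
    rw [hsurj, finrank_top, Module.finrank_self, hWr] at h1
    omega
  have span_Ha : ∀ a, a ≠ 0 →
      Submodule.span L ((Ha a : Submodule K (Fin r → L)) : Set (Fin r → L)) =
        LinearMap.ker (lam a) := by
    intro a ha
    have hle : Submodule.span L ((Ha a : Submodule K (Fin r → L)) : Set (Fin r → L)) ≤
        LinearMap.ker (lam a) := by
      rw [Submodule.span_le]
      rintro z hz
      rw [hHa] at hz
      obtain ⟨x, hx, rfl⟩ := hz
      have hx' : alp a x = 0 := hx
      rw [SetLike.mem_coe, LinearMap.mem_ker]
      show lam a (x : Fin r → L) = 0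
      rw [bridge a x, hx', map_zero]
    apply Submodule.eq_of_le_of_finrank_eq hle
    rw [myFinrankSpanL V hVspan hWrK _ (HaleV a), Ha_rank a ha, ker_rank a ha]
  have exists_a : ∀ H : Submodule K (Fin r → L), H ≤ V → Module.finrank K H = r - 1 →
      ∃ a, a ≠ 0 ∧ Ha a = H := by
    intro H hHV hHr
    set H' := Submodule.comap V.subtype H with hH'
    have hmap : Submodule.map V.subtype H' = H := by
      rw [hH', Submodule.map_comap_subtype]
      exact inf_eq_right.mpr hHV
    have hH'r : Module.finrank K H' = r - 1 := by
      rw [← hHr, ← hmap, Submodule.finrank_map_subtype_eq]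
    have hQ : Module.finrank K (V ⧸ H') = 1 := by
      have h5 := Submodule.finrank_quotient_add_finrank H'
      rw [hVrank, hH'r] at h5
      omega
    obtain ⟨eqv⟩ := FiniteDimensional.nonempty_linearEquiv_of_finrank_eq
      (R := K) (M := V ⧸ H') (M' := K) (by rw [hQ, Module.finrank_self])
    set beta : V →ₗ[K] K := eqv.toLinearMap ∘ₗ H'.mkQ with hbeta
    have hkerb : LinearMap.ker beta = H' := by
      rw [hbeta, LinearMap.ker_comp, LinearEquiv.ker, Submodule.comap_bot, Submodule.ker_mkQ]
    have halpb : alp (fun i => beta (bV i)) = beta := bV.ext fun j => by rw [alp_bV]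
    refine ⟨fun i => beta (bV i), ?_, ?_⟩
    · intro h0
      have hb0 : beta = 0 := by
        apply bV.ext
        intro j
        have := congrFun h0 j
        simpa using this
      have h6 : H' = ⊤ := by rw [← hkerb, hb0, LinearMap.ker_zero]
      have h7 : Module.finrank K H' = r := by rw [h6, finrank_top, hVrank]
      omega
    · rw [hHa]
      simp only
      rw [halpb, hkerb, hmap]
  have prop_a : ∀ a a', a ≠ 0 → a' ≠ 0 → Ha a = Ha a' →
      ∃ k : K, k ≠ 0 ∧ a' = k • a := by
    intro a a' ha ha' hEq
    have hker : LinearMap.ker (lam a) = LinearMap.ker (lam a') := by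
      rw [← span_Ha a ha, ← span_Ha a' ha', hEq]
    obtain ⟨j0, hj0pre⟩ := Function.ne_iff.mp ha
    have hj0 : a j0 ≠ 0 := by simpa using hj0pre
    have keyK : ∀ j, a' j * a j0 = a j * a' j0 := by
      intro j
      have hz : (lam a (w j0)) • (w j) - (lam a (w j)) • (w j0) ∈ LinearMap.ker (lam a) := by
        rw [LinearMap.mem_ker, map_sub, map_smul, map_smul, smul_eq_mul, smul_eq_mul]
        ring
      rw [hker, LinearMap.mem_ker, map_sub, map_smul, map_smul, smul_eq_mul,
        smul_eq_mul, sub_eq_zero] at hz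
      rw [lam_w, lam_w, lam_w, lam_w, ← map_mul, ← map_mul] at hz
      have := (algebraMap K L).injective hz
      linear_combination this
    refine ⟨a' j0 / a j0, ?_, ?_⟩
    · intro hk
      have hz0 : a' j0 = 0 := (div_eq_zero_iff.mp hk).resolve_right hj0
      apply ha'
      funext j
      have h8 := keyK j
      rw [hz0, mul_zero] at h8
      show a' j = 0
      exact mul_right_cancel₀ hj0 (by rw [h8, zero_mul])
    · funext j
      have h8 := keyK j
      show a' j = (a' j0 / a j0) * a j
      field_simp
      linear_combination h8
  have Ha_smul : ∀ (k : K), k ≠ 0 → ∀ a, Ha (k • a) = Ha a := by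
    intro k hk a
    have h9 : alp (k • a) = k • alp a := bV.ext fun j => by
      simp [alp_bV, Pi.smul_apply, smul_eq_mul]
    rw [hHa]
    simp only
    rw [h9, LinearMap.ker_smul _ k hk]
  -- basis of the line U
  obtain ⟨bU⟩ : Nonempty (Basis (Fin 2) L U) := ⟨Module.finBasisOfFinrankEq L U hU⟩
  set e : Fin 2 → (Fin r → L) := fun i => ((bU i : U) : Fin r → L) with he
  have heU : ∀ i, e i ∈ U := fun i => (bU i).2
  have heInd : LinearIndependent L e :=
    bU.linearIndependent.map' U.subtype U.ker_subtype
  have hUspan : Submodule.span L (Set.range e) = U := by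
    have h2 : Submodule.map U.subtype (Submodule.span L (Set.range ⇑bU)) =
        Submodule.span L (U.subtype '' (Set.range ⇑bU)) := Submodule.map_span _ _
    rw [bU.span_eq, Submodule.map_subtype_top] at h2
    rw [h2, ← Set.range_comp]
    rfl
  have indep2 : ∀ c0 c1 : L, c0 • e 0 + c1 • e 1 = 0 → c0 = 0 ∧ c1 = 0 := by
    intro c0 c1 h
    have h2 := Fintype.linearIndependent_iff.mp heInd ![c0, c1] ?_
    · exact ⟨h2 0, h2 1⟩
    · rw [Fin.sum_univ_two]
      simpa using h
  have sum_repr_U : ∀ u (hu : u ∈ U),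
      u = bU.repr ⟨u, hu⟩ 0 • e 0 + bU.repr ⟨u, hu⟩ 1 • e 1 := by
    intro u hu
    have h1 := bU.sum_repr ⟨u, hu⟩
    rw [Fin.sum_univ_two] at h1
    have h2 := congrArg (fun z : U => (z : Fin r → L)) h1
    push_cast at h2
    exact h2.symm
  -- the map g
  set gf : (Fin r → K) → (Fin r → L) :=
    fun a => lam a (e 1) • e 0 - lam a (e 0) • e 1 with hgf
  have gf_add : ∀ a a', gf (a + a') = gf a + gf a' := by
    intro a a'
    simp only [hgf, lam_add]
    module
  have gf_smul : ∀ (k : K) a, gf (k • a) = k • gf a := by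
    intro k a
    simp only [hgf, lam_smulK]
    rw [← algebraMap_smul L k (lam a (e 1) • e 0 - lam a (e 0) • e 1)]
    module
  set g : (Fin r → K) →ₗ[K] (Fin r → L) :=
    { toFun := gf, map_add' := gf_add, map_smul' := gf_smul } with hg
  have g_apply : ∀ a, g a = lam a (e 1) • e 0 - lam a (e 0) • e 1 := fun _ => rfl
  have gU : ∀ a, g a ∈ U := by
    intro a
    rw [g_apply]
    exact sub_mem (U.smul_mem _ (heU 0)) (U.smul_mem _ (heU 1))
  have key_mem : ∀ a u (hu : u ∈ U), u ≠ 0 →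
      (g a ∈ Submodule.span L {u} ↔ lam a u = 0) := by
    intro a u hu hu0
    set x := bU.repr ⟨u, hu⟩ 0 with hx
    set y := bU.repr ⟨u, hu⟩ 1 with hy
    have hu' : u = x • e 0 + y • e 1 := sum_repr_U u hu
    have hxy : ¬ (x = 0 ∧ y = 0) := by
      rintro ⟨h0, h1⟩
      apply hu0
      rw [hu', h0, h1]
      simp
    set A := lam a (e 0) with hA
    set B := lam a (e 1) with hB
    clear_value x y A B
    have hlamu : lam a u = x * A + y * B := by
      rw [hu', map_add, map_smul, map_smul, smul_eq_mul, smul_eq_mul, ← hA, ← hB]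
    constructor
    · intro h
      rw [Submodule.mem_span_singleton] at h
      obtain ⟨mu, hmu⟩ := h
      have h9 : (mu * x - B) • e 0 + (mu * y + A) • e 1 = mu • u - g a := by
        rw [hu', g_apply, ← hA, ← hB]
        module
      rw [hmu, sub_self] at h9
      obtain ⟨hc0, hc1⟩ := indep2 _ _ h9
      rw [hlamu]
      linear_combination x * hc1 - y * hc0
    · intro h0
      rw [hlamu] at h0
      rw [Submodule.mem_span_singleton]
      by_cases hxz : x = 0
      · have hy0 : y ≠ 0 := fun hyy => hxy ⟨hxz, hyy⟩
        have hB0 : B = 0 := by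
          rw [hxz] at h0
          have : y * B = 0 := by linear_combination h0
          exact (mul_eq_zero.mp this).resolve_left hy0
        refine ⟨-A / y, ?_⟩
        rw [g_apply, ← hA, ← hB, hB0, hu', hxz, zero_smul, zero_add, zero_sub,
          smul_smul, div_mul_cancel₀ _ hy0, neg_smul]
      · refine ⟨B / x, ?_⟩
        have hcoef : B / x * y = -A := by
          have h5 : B * y = -A * x := by linear_combination h0
          calc B / x * y = B * y / x := by ring
            _ = (-A * x) / x := by rw [h5]
            _ = -A := mul_div_cancel_right₀ _ hxz
        rw [g_apply, ← hA, ← hB, hu', smul_add, smul_smul, smul_smul,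
          div_mul_cancel₀ _ hxz, hcoef, neg_smul, ← sub_eq_add_neg]
  have g_inj : Function.Injective g := by
    have hzero : ∀ a, g a = 0 → a = 0 := by
      intro a hga
      by_contra ha
      have h9 : lam a (e 1) • e 0 + (-(lam a (e 0))) • e 1 = 0 := by
        rw [← hga, g_apply]
        module
      obtain ⟨hB, hA⟩ := indep2 _ _ h9
      have hA' : lam a (e 0) = 0 := by rwa [neg_eq_zero] at hA
      have hU_le : U ≤ LinearMap.ker (lam a) := by
        rw [← hUspan, Submodule.span_le]
        rintro z ⟨i, rfl⟩
        fin_cases i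
        · simpa [LinearMap.mem_ker] using hA'
        · simpa [LinearMap.mem_ker] using hB
      exact hext (Ha a) (HaleV a) (Ha_rank a ha) (by rw [span_Ha a ha]; exact hU_le)
    intro a b hab
    have : g (a - b) = 0 := by rw [map_sub, hab, sub_self]
    have := hzero _ this
    exact sub_eq_zero.mp this
  have point_repr : ∀ P : Submodule L (Fin r → L), Module.finrank L P = 1 →
      ∃ u : Fin r → L, u ≠ 0 ∧ P = Submodule.span L {u} ∧ u ∈ P := by
    intro P hP
    obtain ⟨bP⟩ : Nonempty (Basis (Fin 1) L P) := ⟨Module.finBasisOfFinrankEq L P hP⟩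
    refine ⟨(bP 0 : Fin r → L), ?_, ?_, (bP 0).2⟩
    · intro h
      exact bP.ne_zero 0 (Subtype.ext h)
    · have hr1 : P.subtype '' (Set.range ⇑bP) = {((bP 0 : P) : Fin r → L)} := by
        ext z
        constructor
        · rintro ⟨zz, ⟨i, rfl⟩, rfl⟩
          fin_cases i
          rfl
        · rintro rfl
          exact ⟨bP 0, ⟨0, rfl⟩, rfl⟩
      calc P = Submodule.map P.subtype ⊤ := (Submodule.map_subtype_top P).symm
        _ = Submodule.span L {((bP 0 : P) : Fin r → L)} := by
            rw [← bP.span_eq, Submodule.map_span, hr1]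
  -- the subspace U'
  refine ⟨LinearMap.range g, ?_, ?_, ?_, ?_⟩
  · rintro z ⟨a, rfl⟩
    exact gU a
  · have hkg : LinearMap.ker g = ⊥ := LinearMap.ker_eq_bot.mpr g_inj
    have h1 := LinearMap.finrank_range_add_finrank_ker g
    rw [hkg, finrank_bot, add_zero] at h1
    rw [h1]
    simp [Module.finrank_pi]
  · ext P
    constructor
    · rintro ⟨z, ⟨a, rfl⟩, hz0, rfl⟩
      have ha : a ≠ 0 := fun h => hz0 (by rw [h, map_zero])
      refine ⟨finrank_span_singleton hz0, ?_, Ha a, HaleV a, Ha_rank a ha, ?_⟩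
      · rw [Submodule.span_le, Set.singleton_subset_iff]
        exact gU a
      · rw [span_Ha a ha, Submodule.span_le, Set.singleton_subset_iff]
        rw [SetLike.mem_coe, LinearMap.mem_ker, g_apply, map_sub, map_smul, map_smul,
          smul_eq_mul, smul_eq_mul]
        ring
    · rintro ⟨h1, hPU, H, hHV, hHr, hPH⟩
      obtain ⟨u, hu0, hPu, huP⟩ := point_repr P h1
      obtain ⟨a, ha, haH⟩ := exists_a H hHV hHr
      have huH : u ∈ Submodule.span L (H : Set (Fin r → L)) := hPH huP
      rw [← haH, span_Ha a ha] at huH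
      have hlau : lam a u = 0 := huH
      have hga : g a ∈ P := by
        rw [hPu]
        exact (key_mem a u (hPU huP) hu0).mpr hlau
      have hg0 : g a ≠ 0 := fun h => ha (g_inj (by rw [h, map_zero]))
      refine ⟨g a, ⟨a, rfl⟩, hg0, ?_⟩
      refine (Submodule.eq_of_le_of_finrank_eq ?_ ?_).symm
      · rw [Submodule.span_le, Set.singleton_subset_iff]
        exact hga
      · rw [finrank_span_singleton hg0, h1]
  · intro P hP j hj
    obtain ⟨h1, hPU, H0, hH0V, hH0r, hPH0⟩ := hP
    obtain ⟨u, hu0, hPu, huP⟩ := point_repr P h1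
    have huU : u ∈ U := hPU huP
    set ell : (Fin r → K) →ₗ[K] L :=
      { toFun := fun a => lam a u,
        map_add' := fun a a' => lam_add a a' u,
        map_smul' := fun k a => by
          show lam (k • a) u = (RingHom.id K) k • lam a u
          rw [lam_smulK]
          simp [Algebra.smul_def] } with hell
    have ell_apply : ∀ a, ell a = lam a u := fun _ => rfl
    set Wu := LinearMap.ker ell with hWu
    set wgt := Module.finrank K Wu with hwgt
    have hpart1 : LinearMap.range g ⊓ P.restrictScalars K = Submodule.map g Wu := by
      ext z
      constructor
      · rintro ⟨⟨a, rfl⟩, hzP⟩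
        refine ⟨a, ?_, rfl⟩
        exact (key_mem a u huU hu0).mp (by rw [← hPu]; exact hzP)
      · rintro ⟨a, haWu, rfl⟩
        refine ⟨⟨a, rfl⟩, ?_⟩
        have haWu' : lam a u = 0 := haWu
        have : g a ∈ Submodule.span L {u} := (key_mem a u huU hu0).mpr haWu'
        rw [← hPu] at this
        exact this
    have hweq : Module.finrank K ↥(LinearMap.range g ⊓ P.restrictScalars K) = wgt := by
      rw [hpart1]
      exact ((Submodule.equivMapOfInjective g g_inj Wu).finrank_eq).symm
    set D := {a : Fin r → K // a ∈ Wu ∧ a ≠ 0} with hD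
    have hF0 : ∀ (a : D), Ha a.1 ≤ V ∧ Module.finrank K (Ha a.1) = r - 1 ∧
        P ≤ Submodule.span L ((Ha a.1 : Submodule K (Fin r → L)) : Set (Fin r → L)) := by
      rintro ⟨a, haWu, ha0⟩
      refine ⟨HaleV a, Ha_rank a ha0, ?_⟩
      rw [span_Ha a ha0, hPu, Submodule.span_le, Set.singleton_subset_iff]
      exact haWu
    set T := {H : Submodule K (Fin r → L) // H ≤ V ∧ Module.finrank K H = r - 1 ∧
        P ≤ Submodule.span L (H : Set (Fin r → L))} with hT
    set F : D → T := fun a => ⟨Ha a.1, hF0 a⟩ with hF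
    have hFsurj : Function.Surjective F := by
      rintro ⟨H, hHV, hHr, hPH⟩
      obtain ⟨a, ha0, haH⟩ := exists_a H hHV hHr
      have hlau : lam a u = 0 := by
        have h5 := hPH huP
        rw [← haH, span_Ha a ha0] at h5
        exact h5
      exact ⟨⟨a, hlau, ha0⟩, Subtype.ext haH⟩
    haveI : Finite T := Finite.of_surjective F hFsurj
    haveI : Fintype T := Fintype.ofFinite T
    haveI : Fintype D := Fintype.ofFinite D
    haveI : Fintype Wu := Fintype.ofFinite Wu
    have hqcard : Nat.card {k : K // k ≠ 0} = q - 1 := by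
      rw [← Nat.card_congr (unitsEquivNeZero (G₀ := K)), Nat.card_units,
        Nat.card_eq_fintype_card, hq]
    have hfiber : ∀ t : T, Nat.card {a : D // F a = t} = q - 1 := by
      intro t
      obtain ⟨a0, ha0⟩ := hFsurj t
      have ha0ne : a0.1 ≠ 0 := a0.2.2
      obtain ⟨j1, hj1⟩ := Function.ne_iff.mp ha0ne
      have hmem : ∀ k : {k : K // k ≠ 0}, (k.1 • a0.1 ∈ Wu ∧ k.1 • a0.1 ≠ 0) :=
        fun k => ⟨Wu.smul_mem k.1 a0.2.1, smul_ne_zero k.2 ha0ne⟩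
      have hFk : ∀ k : {k : K // k ≠ 0},
          F ⟨k.1 • a0.1, hmem k⟩ = t := by
        intro k
        rw [← ha0]
        apply Subtype.ext
        show Ha (k.1 • a0.1) = Ha a0.1
        exact Ha_smul k.1 k.2 a0.1
      set phi : {k : K // k ≠ 0} → {a : D // F a = t} :=
        fun k => ⟨⟨k.1 • a0.1, hmem k⟩, hFk k⟩ with hphi
      have hbij : Function.Bijective phi := by
        constructor
        · intro k k' hkk
          have h6 : k.1 • a0.1 = k'.1 • a0.1 := by
            have := congrArg (fun z => z.1.1) hkk
            exact this
          apply Subtype.ext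
          have := congrFun h6 j1
          simp only [Pi.smul_apply, smul_eq_mul] at this
          exact mul_right_cancel₀ hj1 this
        · rintro ⟨⟨b, hbWu, hb0⟩, hFb⟩
          have hHab : Ha b = Ha a0.1 := by
            have h7 : F ⟨b, hbWu, hb0⟩ = F a0 := by rw [hFb, ha0]
            exact congrArg (fun z => z.1) h7
          obtain ⟨k, hk0, hkb⟩ := prop_a a0.1 b ha0ne hb0 hHab.symm
          refine ⟨⟨k, hk0⟩, ?_⟩
          apply Subtype.ext
          apply Subtype.ext
          show k • a0.1 = b
          exact hkb.symm
      rw [← Nat.card_congr (Equiv.ofBijective phi hbij)]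
      exact hqcard
    have hDcard : Nat.card D = q ^ wgt - 1 := by
      have e1 : D ≃ {b : Wu // ¬ b = 0} :=
        { toFun := fun a => ⟨⟨a.1, a.2.1⟩, fun h => a.2.2 (congrArg Subtype.val h)⟩,
          invFun := fun b => ⟨b.1.1, b.1.2, fun h => b.2 (Subtype.ext h)⟩,
          left_inv := fun _ => rfl,
          right_inv := fun _ => rfl }
      rw [Nat.card_congr e1, Nat.card_eq_fintype_card]
      have h8 : Fintype.card Wu = q ^ wgt := by
        rw [card_eq_pow_finrank (K := K), hq, hwgt]
      rw [Fintype.card_subtype_compl, Fintype.card_subtype_eq (0 : Wu), h8]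
    have hsum : Nat.card D = Nat.card T * (q - 1) := by
      haveI : ∀ t : T, Fintype {a : D // F a = t} := fun t => Fintype.ofFinite _
      calc Nat.card D = Nat.card ((t : T) × {a : D // F a = t}) :=
            (Nat.card_congr (Equiv.sigmaFiberEquiv F)).symm
        _ = ∑ t : T, Nat.card {a : D // F a = t} := by
            rw [Nat.card_eq_fintype_card, Fintype.card_sigma]
            exact Finset.sum_congr rfl fun t _ => (Nat.card_eq_fintype_card).symm
        _ = ∑ _t : T, (q - 1) := Finset.sum_congr rfl fun t _ => hfiber t
        _ = Nat.card T * (q - 1) := by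
            rw [Finset.sum_const, Finset.card_univ, smul_eq_mul, Nat.card_eq_fintype_card]
    have hw1 : 1 ≤ wgt := by
      obtain ⟨a, ha0, haH⟩ := exists_a H0 hH0V hH0r
      have haWu : a ∈ Wu := by
        have h5 := hPH0 huP
        rw [← haH, span_Ha a ha0] at h5
        exact h5
      rcases Nat.eq_zero_or_pos wgt with h0 | h1
      · exfalso
        have hWbot : Wu = ⊥ := Submodule.finrank_eq_zero.mp (hwgt.symm.trans h0)
        rw [hWbot, Submodule.mem_bot] at haWu
        exact ha0 haWu
      · exact h1
    have hcount : Nat.card T = (q ^ wgt - 1) / (q - 1) := by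
      have h2 : Nat.card T * (q - 1) = q ^ wgt - 1 := by rw [← hsum, hDcard]
      rw [← h2, Nat.mul_div_cancel _ (by omega : 0 < q - 1)]
    rw [hweq]
    constructor
    · rintro rfl
      exact hcount
    · intro hc
      have heq2 : (q ^ wgt - 1) / (q - 1) = (q ^ j - 1) / (q - 1) := hcount.symm.trans hc
      have d1 : (q - 1) ∣ (q ^ wgt - 1) := by
        simpa using Nat.sub_dvd_pow_sub_pow q 1 wgt
      have d2 : (q - 1) ∣ (q ^ j - 1) := by
        simpa using Nat.sub_dvd_pow_sub_pow q 1 j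
      have h3 : q ^ wgt - 1 = q ^ j - 1 := by
        calc q ^ wgt - 1 = (q ^ wgt - 1) / (q - 1) * (q - 1) := (Nat.div_mul_cancel d1).symm
          _ = (q ^ j - 1) / (q - 1) * (q - 1) := by rw [heq2]
          _ = q ^ j - 1 := Nat.div_mul_cancel d2
      have p1 : 1 ≤ q ^ wgt := Nat.one_le_pow _ _ (by omega)
      have p2 : 1 ≤ q ^ j := Nat.one_le_pow _ _ (by omega)
      have h4 : q ^ wgt = q ^ j := by omega
      exact Nat.pow_right_injective hq2 h4
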